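/- Let α ∈ [1,2), ℓ > 0, λ > 0, ν = (α-1)/(2-α), and let Φ₋(x) = x^{(1-α)/2}·J_{-ν}((2/(2-α))·√λ·x^{(2-α)/2}) on (0,ℓ), where ν ∉ ℕ. Then Φ₋ ∉ H¹_α(0,ℓ), i.e. x^{α/2}·Φ₋'(x) is not in L²(0,ℓ). -/

import Mathlib

open Real MeasureTheory Filter Set

/-- The Bessel function of the first kind of order `ν`, defined by its series
for positive arguments (using real powers). -/
noncomputable def besselJ (ν x : ℝ) : ℝ :=
  ∑' m : ℕ, ((-1 : ℝ) ^ m / (m.factorial * Real.Gamma ((m : ℝ) + ν + 1))) *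
    (x / 2) ^ (2 * (m : ℝ) + ν)

noncomputable def bb (ν C : ℝ) (m : ℕ) : ℝ :=
  ((-1 : ℝ) ^ m / (m.factorial * Real.Gamma ((m : ℝ) + -ν + 1))) * C ^ (2 * (m : ℝ) + -ν)

lemma gamma_ne (ν : ℝ) (hνnat : ∀ n : ℕ, ν ≠ n) (m : ℕ) :
    Real.Gamma ((m : ℝ) + -ν + 1) ≠ 0 := by
  apply Real.Gamma_ne_zero
  intro k h
  have := hνnat (m + k + 1)
  push_cast at this
  apply this; linarith

lemma bb_ne (ν C : ℝ) (hC : 0 < C) (hνnat : ∀ n : ℕ, ν ≠ n) (m : ℕ) : bb ν C m ≠ 0 := by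
  unfold bb
  apply mul_ne_zero
  · apply div_ne_zero (pow_ne_zero _ (by norm_num))
    exact mul_ne_zero (by positivity) (gamma_ne ν hνnat m)
  · exact (Real.rpow_pos_of_pos hC _).ne'

lemma bb_succ (ν C : ℝ) (hC : 0 < C) (hνnat : ∀ n : ℕ, ν ≠ n) (m : ℕ) :
    bb ν C (m + 1) * ((((m : ℝ)) + 1) * (((m : ℝ) + 1) - ν)) = -(bb ν C m) * C ^ 2 := by
  have hg := gamma_ne ν hνnat m
  have hne : (m : ℝ) + -ν + 1 ≠ 0 := by
    have := hνnat (m + 1); push_cast at this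
    intro h; apply this; linarith
  have hΓ : Real.Gamma (((m + 1 : ℕ) : ℝ) + -ν + 1)
      = ((m : ℝ) + -ν + 1) * Real.Gamma ((m : ℝ) + -ν + 1) := by
    have h1 : ((m + 1 : ℕ) : ℝ) + -ν + 1 = ((m : ℝ) + -ν + 1) + 1 := by push_cast; ring
    rw [h1, Real.Gamma_add_one hne]
  have hc : C ^ (2 * ((m + 1 : ℕ) : ℝ) + -ν) = C ^ (2 * (m : ℝ) + -ν) * C ^ 2 := by
    rw [← Real.rpow_natCast C 2, ← Real.rpow_add hC]
    congr 1; push_cast; ring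
  have hfac : (((m + 1).factorial : ℝ)) = ((m : ℝ) + 1) * (m.factorial : ℝ) := by
    rw [Nat.factorial_succ]; push_cast; ring
  unfold bb
  rw [hΓ, hc, hfac, pow_succ]
  have hm : ((m.factorial : ℝ)) ≠ 0 := by positivity
  field_simp
  ring

lemma summable_u (ν C : ℝ) (hC : 0 < C) (hνnat : ∀ n : ℕ, ν ≠ n) :
    Summable (fun m : ℕ => |bb ν C m| * ((m : ℝ) + 1)) := by
  apply summable_of_ratio_norm_eventually_le (show (1:ℝ)/2 < 1 by norm_num)
  obtain ⟨N, hN⟩ := exists_nat_ge (ν + 4 * C ^ 2 + 2)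
  filter_upwards [eventually_ge_atTop N] with m hm
  have hmN : (ν + 4 * C ^ 2 + 2 : ℝ) ≤ (m : ℝ) := hN.trans (by exact_mod_cast hm)
  have hM0 : (0:ℝ) ≤ (m:ℝ) := Nat.cast_nonneg m
  have hpos : (0:ℝ) < ((m:ℝ) + 1) * (((m:ℝ) + 1) - ν) := by nlinarith [sq_nonneg C]
  have heq : |bb ν C (m + 1)| * (((m : ℝ) + 1) * (((m : ℝ) + 1) - ν)) = |bb ν C m| * C ^ 2 := by
    have := congrArg abs (bb_succ ν C hC hνnat m)
    rwa [abs_mul, abs_of_pos hpos, abs_mul, abs_neg,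
      abs_of_pos (by positivity : (0:ℝ) < C ^ 2)] at this
  have hB1 : (0:ℝ) ≤ |bb ν C (m+1)| := abs_nonneg _
  have hB0 : (0:ℝ) ≤ |bb ν C m| := abs_nonneg _
  rw [Real.norm_eq_abs, Real.norm_eq_abs,
    abs_of_nonneg (mul_nonneg hB1 (by positivity)), abs_of_nonneg (mul_nonneg hB0 (by positivity))]
  push_cast
  nlinarith [heq, sq_nonneg C, mul_nonneg hB0 (sq_nonneg C), mul_nonneg hB1 hM0,
    mul_nonneg (mul_nonneg hB1 hM0) hM0]

theorem second_solution_not_in_H1alpha (α ℓ lam ν : ℝ)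
    (hα : α ∈ Set.Ico (1:ℝ) 2) (hℓ : 0 < ℓ) (hlam : 0 < lam)
    (hν : ν = (α - 1) / (2 - α)) (hνnat : ∀ n : ℕ, ν ≠ n) :
    ¬ MeasureTheory.IntegrableOn
        (fun x : ℝ =>
          (x ^ (α / 2) *
            deriv (fun t : ℝ =>
              t ^ ((1 - α) / 2) *
                besselJ (-ν) (2 / (2 - α) * Real.sqrt lam * t ^ ((2 - α) / 2))) x) ^ 2)
        (Set.Ioo 0 ℓ) := by
  obtain ⟨hα1, hα2⟩ := hα
  have hγ : (0:ℝ) < 2 - α := by linarith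
  have hα1' : 1 < α := by
    rcases eq_or_lt_of_le hα1 with h | h
    · exfalso; apply hνnat 0; rw [hν, ← h]; norm_num
    · exact h
  set C := Real.sqrt lam / (2 - α) with hCdef
  have hC : 0 < C := div_pos (Real.sqrt_pos.2 hlam) hγ
  have hkey : ν * (2 - α) = α - 1 := by rw [hν]; field_simp
  set f : ℝ → ℝ := fun z => ∑' m : ℕ, bb ν C m * z ^ m with hf
  set f' : ℝ → ℝ := fun s => ∑' m : ℕ, bb ν C m * ((m : ℝ) * s ^ (m - 1)) with hf'
  set U : ℝ := ∑' m : ℕ, |bb ν C m| * ((m : ℝ) + 1) with hU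
  have hu := summable_u ν C hC hνnat
  have hbound : ∀ (m : ℕ) (y : ℝ), y ∈ Ioo (-1:ℝ) 1 →
      ‖bb ν C m * ((m : ℝ) * y ^ (m - 1))‖ ≤ |bb ν C m| * ((m : ℝ) + 1) := by
    intro m y hy
    rw [Real.norm_eq_abs, abs_mul]
    apply mul_le_mul_of_nonneg_left _ (abs_nonneg _)
    rw [abs_mul, abs_pow, Nat.abs_cast]
    calc (m:ℝ) * |y| ^ (m - 1) ≤ (m:ℝ) * 1 := by
          apply mul_le_mul_of_nonneg_left _ (Nat.cast_nonneg m)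
          exact pow_le_one₀ (abs_nonneg y) (le_of_lt (abs_lt.2 ⟨hy.1, hy.2⟩))
      _ ≤ (m:ℝ) + 1 := by linarith
  have hderiv : ∀ s ∈ Ioo (-1:ℝ) 1, HasDerivAt f (f' s) s := by
    intro s hs
    apply hasDerivAt_tsum_of_isPreconnected hu isOpen_Ioo isPreconnected_Ioo
      (fun m y _ => (hasDerivAt_pow m y).const_mul (bb ν C m)) hbound
      (show (0:ℝ) ∈ Ioo (-1:ℝ) 1 by norm_num) _ hs
    apply summable_of_ne_finset_zero (s := {0})
    intro m hm
    simp [zero_pow (by simpa using hm)]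
  have hf'bound : ∀ s ∈ Ioo (-1:ℝ) 1, |f' s| ≤ U := by
    intro s hs
    have hsum : Summable (fun m : ℕ => bb ν C m * ((m : ℝ) * s ^ (m - 1))) :=
      hu.of_norm_bounded (fun m => hbound m s hs)
    calc |f' s| ≤ ∑' m : ℕ, ‖bb ν C m * ((m : ℝ) * s ^ (m - 1))‖ := by
          rw [← Real.norm_eq_abs]; exact norm_tsum_le_tsum_norm hsum.norm
      _ ≤ U := Summable.tsum_le_tsum (fun m => hbound m s hs) hsum.norm hu
  have hf0 : f 0 = bb ν C 0 := by
    have h1 : f 0 = ∑' m : ℕ, bb ν C m * (0:ℝ) ^ m := rfl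
    rw [h1, tsum_eq_single 0 (fun m hm => by simp [zero_pow hm])]
    simp
  -- pointwise identity
  have hpt : ∀ t : ℝ, 0 < t →
      t ^ ((1 - α) / 2) * besselJ (-ν) (2 / (2 - α) * Real.sqrt lam * t ^ ((2 - α) / 2))
        = t ^ (1 - α) * f (t ^ (2 - α)) := by
    intro t ht
    rw [hf]
    unfold besselJ
    rw [← tsum_mul_left, ← tsum_mul_left]
    apply tsum_congr
    intro m
    have harg : 2 / (2 - α) * Real.sqrt lam * t ^ ((2 - α) / 2) / 2 = C * t ^ ((2 - α) / 2) := by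
      rw [hCdef]; field_simp
    rw [harg]
    have htp : (0:ℝ) < t ^ ((2 - α) / 2) := Real.rpow_pos_of_pos ht _
    rw [Real.mul_rpow hC.le htp.le, ← Real.rpow_natCast (t ^ (2 - α)) m,
      ← Real.rpow_mul ht.le, ← Real.rpow_mul ht.le]
    have hexp : (2 - α) / 2 * (2 * (m:ℝ) + -ν) = (2 - α) * (m:ℝ) - (α - 1) / 2 := by
      field_simp
      nlinarith [hkey]
    rw [hexp]
    rw [show t ^ ((1 - α) / 2) * (((-1:ℝ) ^ m / (↑m.factorial * Real.Gamma (↑m + -ν + 1))) *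
        (C ^ (2 * (m:ℝ) + -ν) * t ^ ((2 - α) * (m:ℝ) - (α - 1) / 2)))
      = (((-1:ℝ) ^ m / (↑m.factorial * Real.Gamma (↑m + -ν + 1))) * C ^ (2 * (m:ℝ) + -ν)) *
        (t ^ ((1 - α) / 2) * t ^ ((2 - α) * (m:ℝ) - (α - 1) / 2)) from by ring,
      ← Real.rpow_add ht]
    rw [show t ^ (1 - α) * (bb ν C m * t ^ ((2 - α) * (m:ℝ)))
      = bb ν C m * (t ^ (1 - α) * t ^ ((2 - α) * (m:ℝ))) from by ring, ← Real.rpow_add ht]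
    rw [bb]
    congr 2
    ring
  -- the auxiliary function hh
  set hh : ℝ → ℝ := fun x => (1 - α) * f (x ^ (2 - α)) + (2 - α) * x ^ (2 - α) * f' (x ^ (2 - α))
    with hhh
  -- derivative formula
  have hF : ∀ x ∈ Ioo (0:ℝ) 1,
      (x ^ (α / 2) * deriv (fun t : ℝ =>
        t ^ ((1 - α) / 2) *
          besselJ (-ν) (2 / (2 - α) * Real.sqrt lam * t ^ ((2 - α) / 2))) x) ^ 2
      = x ^ (-α) * (hh x) ^ 2 := by
    intro x hx
    have hx0 : 0 < x := hx.1
    have hs : x ^ (2 - α) ∈ Ioo (-1:ℝ) 1 := by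
      constructor
      · linarith [Real.rpow_pos_of_pos hx0 (2 - α)]
      · exact Real.rpow_lt_one hx0.le hx.2 hγ
    have h1 : HasDerivAt (fun t : ℝ => t ^ (1 - α)) ((1 - α) * x ^ (1 - α - 1)) x :=
      Real.hasDerivAt_rpow_const (Or.inl hx0.ne')
    have h2 : HasDerivAt (fun t : ℝ => t ^ (2 - α)) ((2 - α) * x ^ (2 - α - 1)) x :=
      Real.hasDerivAt_rpow_const (Or.inl hx0.ne')
    have h3 : HasDerivAt f (f' (x ^ (2 - α))) (x ^ (2 - α)) := hderiv _ hs
    have hcomp : HasDerivAt (fun t : ℝ => f (t ^ (2 - α)))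
        (f' (x ^ (2 - α)) * ((2 - α) * x ^ (2 - α - 1))) x := by have := h3.comp x h2; exact this
    have hΨ : HasDerivAt (fun t : ℝ => t ^ (1 - α) * f (t ^ (2 - α)))
        ((1 - α) * x ^ (1 - α - 1) * f (x ^ (2 - α))
          + x ^ (1 - α) * (f' (x ^ (2 - α)) * ((2 - α) * x ^ (2 - α - 1)))) x := h1.mul hcomp
    have hEq : (fun t : ℝ =>
        t ^ ((1 - α) / 2) *
          besselJ (-ν) (2 / (2 - α) * Real.sqrt lam * t ^ ((2 - α) / 2)))
        =ᶠ[nhds x] (fun t : ℝ => t ^ (1 - α) * f (t ^ (2 - α))) := by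
      filter_upwards [Ioi_mem_nhds hx0] with t ht
      exact hpt t ht
    rw [hEq.deriv_eq, hΨ.deriv]
    have hxa : ∀ p q : ℝ, x ^ p * x ^ q = x ^ (p + q) := fun p q => (Real.rpow_add hx0 p q).symm
    have e1 : x ^ (α / 2) * ((1 - α) * x ^ (1 - α - 1) * f (x ^ (2 - α))
        + x ^ (1 - α) * (f' (x ^ (2 - α)) * ((2 - α) * x ^ (2 - α - 1))))
        = x ^ (-(α / 2)) * hh x := by
      rw [hhh]
      rw [show x ^ (α / 2) * ((1 - α) * x ^ (1 - α - 1) * f (x ^ (2 - α))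
          + x ^ (1 - α) * (f' (x ^ (2 - α)) * ((2 - α) * x ^ (2 - α - 1))))
        = (1 - α) * (x ^ (α / 2) * x ^ (1 - α - 1)) * f (x ^ (2 - α))
          + (2 - α) * (x ^ (α / 2) * (x ^ (1 - α) * x ^ (2 - α - 1))) * f' (x ^ (2 - α))
        from by ring]
      rw [hxa, hxa, hxa]
      rw [show α / 2 + (1 - α - 1) = -(α / 2) by ring,
        show α / 2 + (1 - α + (2 - α - 1)) = -(α / 2) + (2 - α) by ring,
        Real.rpow_add hx0]
      ring
    rw [e1, mul_pow, ← Real.rpow_natCast (x ^ (-(α/2))) 2, ← Real.rpow_mul hx0.le]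
    norm_num
  -- limit of hh
  have hb0 : bb ν C 0 ≠ 0 := bb_ne ν C hC hνnat 0
  set L : ℝ := (1 - α) * bb ν C 0 with hL
  have hLne : L ≠ 0 := mul_ne_zero (by linarith) hb0
  have htendsto : Tendsto hh (nhdsWithin 0 (Ioi 0)) (nhds L) := by
    have ht0 : Tendsto (fun x : ℝ => x ^ (2 - α)) (nhdsWithin 0 (Ioi 0)) (nhds 0) := by
      have : ContinuousAt (fun x : ℝ => x ^ (2 - α)) 0 :=
        Real.continuousAt_rpow_const 0 (2 - α) (Or.inr hγ.le)
      have h0 : (0:ℝ) ^ (2 - α) = 0 := Real.zero_rpow hγ.ne'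
      simpa [h0] using this.tendsto.mono_left nhdsWithin_le_nhds
    have hfc : ContinuousAt f 0 := (hderiv 0 (by norm_num)).continuousAt
    have t1 : Tendsto (fun x : ℝ => (1 - α) * f (x ^ (2 - α)))
        (nhdsWithin 0 (Ioi 0)) (nhds ((1 - α) * bb ν C 0)) := by
      have := (hfc.tendsto.comp ht0)
      rw [hf0] at this
      exact this.const_mul _
    have t2 : Tendsto (fun x : ℝ => (2 - α) * x ^ (2 - α) * f' (x ^ (2 - α)))
        (nhdsWithin 0 (Ioi 0)) (nhds 0) := by
      apply squeeze_zero_norm' (a := fun x : ℝ => (2 - α) * x ^ (2 - α) * U)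
      · filter_upwards [Ioo_mem_nhdsGT_of_mem (Set.mem_Ico.2 ⟨le_refl (0:ℝ), zero_lt_one⟩)]
          with x hx
        have hxs : x ^ (2 - α) ∈ Ioo (-1:ℝ) 1 := by
          constructor
          · linarith [Real.rpow_pos_of_pos hx.1 (2 - α)]
          · exact Real.rpow_lt_one hx.1.le hx.2 hγ
        have hp : (0:ℝ) < x ^ (2 - α) := Real.rpow_pos_of_pos hx.1 _
        rw [Real.norm_eq_abs, abs_mul, abs_mul, abs_of_pos hγ, abs_of_pos hp]
        apply mul_le_mul_of_nonneg_left (hf'bound _ hxs)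
        positivity
      · have := ht0.const_mul (2 - α)
        have h2 : Tendsto (fun x : ℝ => (2 - α) * x ^ (2 - α) * U)
            (nhdsWithin 0 (Ioi 0)) (nhds ((2 - α) * 0 * U)) := (this.mul_const U)
        simpa using h2
    have := t1.add t2
    rw [hL]
    simpa using this
  -- eventually bound
  have hev : ∀ᶠ x in nhdsWithin 0 (Ioi 0), |L| / 2 ≤ |hh x| := by
    have habs : Tendsto (fun x => |hh x|) (nhdsWithin 0 (Ioi 0)) (nhds |L|) := htendsto.abs
    have : Ioi (|L| / 2) ∈ nhds |L| := Ioi_mem_nhds (by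
      have : 0 < |L| := abs_pos.2 hLne
      linarith)
    filter_upwards [habs this] with x hx
    exact le_of_lt hx
  have hev2 : ∀ᶠ x in nhdsWithin 0 (Ioi 0), x ∈ Ioo (0:ℝ) 1 :=
    Ioo_mem_nhdsGT_of_mem (Set.mem_Ico.2 ⟨le_refl (0:ℝ), zero_lt_one⟩)
  obtain ⟨δ₀, hδ₀, hδall⟩ : ∃ δ > 0, ∀ x ∈ Ioo (0:ℝ) δ, |L| / 2 ≤ |hh x| ∧ x ∈ Ioo (0:ℝ) 1 := by
    have := hev.and hev2
    rw [eventually_nhdsWithin_iff, Metric.eventually_nhds_iff] at this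
    obtain ⟨ε, hε, hball⟩ := this
    refine ⟨ε, hε, fun x hx => hball ?_ hx.1⟩
    rw [Real.dist_eq, sub_zero, abs_of_pos hx.1]
    exact hx.2
  set δ : ℝ := min δ₀ ℓ with hδdef
  have hδpos : 0 < δ := lt_min hδ₀ hℓ
  -- final contradiction
  intro Hint
  have Hint' : IntegrableOn
      (fun x : ℝ => (x ^ (α / 2) * deriv (fun t : ℝ =>
        t ^ ((1 - α) / 2) *
          besselJ (-ν) (2 / (2 - α) * Real.sqrt lam * t ^ ((2 - α) / 2))) x) ^ 2)
      (Ioo 0 δ) := Hint.mono_set (Ioo_subset_Ioo le_rfl (min_le_right _ _))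
  have hInt2 : IntegrableOn (fun x : ℝ => (|L| / 2) ^ 2 * x ^ (-α)) (Ioo 0 δ) := by
    apply Integrable.mono' Hint'
    · apply AEStronglyMeasurable.const_mul
      exact (measurable_id.pow_const (-α)).aestronglyMeasurable
    · rw [ae_restrict_iff' measurableSet_Ioo]
      apply ae_of_all
      intro x hx
      have hx0 : 0 < x := hx.1
      have hxδ₀ : x ∈ Ioo (0:ℝ) δ₀ := ⟨hx.1, lt_of_lt_of_le hx.2 (min_le_left _ _)⟩
      obtain ⟨hhx, hx1⟩ := hδall x hxδ₀
      rw [Real.norm_eq_abs, abs_of_nonneg (by positivity)]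
      rw [hF x hx1]
      apply mul_le_mul_of_nonneg_right _ (le_of_lt (Real.rpow_pos_of_pos hx0 _)) |>.trans_eq
        (mul_comm _ _)
      calc (|L| / 2) ^ 2 ≤ |hh x| ^ 2 := by
            apply pow_le_pow_left₀ (by positivity) hhx
        _ = (hh x) ^ 2 := sq_abs _
    -- done
  have hInt3 : IntegrableOn (fun x : ℝ => x ^ (-α)) (Ioo 0 δ) := by
    have hc : ((|L| / 2) ^ 2 : ℝ) ≠ 0 := by
      have : 0 < |L| := abs_pos.2 hLne
      positivity
    have h3 := hInt2.const_mul (((|L| / 2) ^ 2)⁻¹)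
    simpa [IntegrableOn, ← mul_assoc, inv_mul_cancel₀ hc] using h3
  rw [intervalIntegral.integrableOn_Ioo_rpow_iff hδpos] at hInt3
  linarith
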